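/- With a = i, b = 1, the determinant of the 2k×2k matrix F_{2k} (defined from A_k and B_k) equals F(k+1)², the square of the (k+1)-st Fibonacci number, for all k ≥ 1. -/

import Mathlib

open Matrix

def triM (n : ℕ) (c : ℂ) : Matrix (Fin n) (Fin n) ℂ :=
  fun p q => if p = q then c else if q.1 = p.1 + 1 then Complex.I
    else if p.1 = q.1 + 1 then -Complex.I else 0

lemma triM_sub1 (n : ℕ) (c : ℂ) :
    (triM (n+2) c).submatrix Fin.succ Fin.succ = triM (n+1) c := by
  ext p q
  simp [triM, Fin.ext_iff]

lemma succAbove_one_succ (n : ℕ) (j : Fin n) :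
    ((Fin.succ (0 : Fin (n+1))).succAbove j.succ) = j.succ.succ := by
  ext
  simp [Fin.succAbove, Fin.lt_def]

lemma succAbove_one_zero (n : ℕ) :
    ((Fin.succ (0 : Fin (n+1))).succAbove (0 : Fin (n+1))) = 0 := by
  ext
  simp [Fin.succAbove, Fin.lt_def]

lemma triM_rec (n : ℕ) (c : ℂ) :
    (triM (n+2) c).det = c * (triM (n+1) c).det - (triM n c).det := by
  rw [Matrix.det_succ_row_zero]
  rw [Fin.sum_univ_succ, Fin.sum_univ_succ]
  have h0 : ∀ j : Fin n, triM (n+2) c 0 j.succ.succ = 0 := by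
    intro j; simp [triM, Fin.ext_iff]
  simp only [h0, mul_zero, zero_mul, mul_zero, Finset.sum_const_zero, add_zero]
  simp only [Fin.val_zero, pow_zero, one_mul, Fin.val_succ, pow_one]
  have e00 : triM (n + 2) c 0 0 = c := by simp [triM]
  have e01 : triM (n + 2) c 0 (Fin.succ 0) = Complex.I := by
    simp [triM, Fin.ext_iff]
  rw [e00, e01, Fin.succAbove_zero, triM_sub1]
  have hB : ((triM (n+2) c).submatrix Fin.succ (Fin.succ 0).succAbove).det
      = -Complex.I * (triM n c).det := by
    rw [Matrix.det_succ_column_zero]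
    rw [Fin.sum_univ_succ]
    have hz : ∀ i : Fin n,
        (triM (n+2) c).submatrix Fin.succ (Fin.succ 0).succAbove i.succ 0 = 0 := by
      intro i
      have : ((Fin.succ (0 : Fin (n+1))).succAbove (0 : Fin (n+1))) = 0 :=
        succAbove_one_zero n
      simp [this, triM, Fin.ext_iff]
    simp only [hz, mul_zero, zero_mul, Finset.sum_const_zero, add_zero]
    have e10 : (triM (n+2) c).submatrix Fin.succ (Fin.succ 0).succAbove 0 0
        = -Complex.I := by
      have : ((Fin.succ (0 : Fin (n+1))).succAbove (0 : Fin (n+1))) = 0 :=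
        succAbove_one_zero n
      simp [this, triM, Fin.ext_iff]
    have esub : ((triM (n+2) c).submatrix Fin.succ (Fin.succ 0).succAbove).submatrix
        (Fin.succAbove 0) Fin.succ = triM n c := by
      ext p q
      have : ((Fin.succ (0 : Fin (n+1))).succAbove q.succ) = q.succ.succ :=
        succAbove_one_succ n q
      simp [this, triM, Fin.ext_iff]
    rw [e10, esub]
    simp
  rw [hB]
  ring_nf
  rw [Complex.I_sq]
  ring

lemma triM_det_I : ∀ n : ℕ, (triM n Complex.I).det
    = Complex.I ^ n * (Nat.fib (n+1) : ℂ) := by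
  intro n
  induction n using Nat.strong_induction_on with
  | _ n ih =>
    match n with
    | 0 => simp
    | 1 =>
      rw [Matrix.det_fin_one]
      simp [triM]
    | (m+2) =>
      rw [triM_rec, ih (m+1) (by omega), ih m (by omega)]
      push_cast [Nat.fib_add_two]
      linear_combination -(Complex.I ^ m * (Nat.fib (m+1) : ℂ)) * Complex.I_sq

lemma triM_det_negI : ∀ n : ℕ, (triM n (-Complex.I)).det
    = (-Complex.I) ^ n * (Nat.fib (n+1) : ℂ) := by
  intro n
  induction n using Nat.strong_induction_on with
  | _ n ih =>
    match n with
    | 0 => simp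
    | 1 =>
      rw [Matrix.det_fin_one]
      simp [triM]
    | (m+2) =>
      rw [triM_rec, ih (m+1) (by omega), ih m (by omega)]
      push_cast [Nat.fib_add_two]
      have hsq : (-Complex.I) ^ 2 = -1 := by
        rw [neg_pow, Complex.I_sq]; ring
      linear_combination -((-Complex.I) ^ m * (Nat.fib (m+1) : ℂ)) * hsq

lemma negpow (a b : ℕ) (h : a % 2 = b % 2) : ((-1:ℂ))^a = (-1)^b := by
  rw [← Nat.div_add_mod a 2, ← Nat.div_add_mod b 2, pow_add, pow_add,
    pow_mul, pow_mul]
  norm_num [h]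

/-- With `a = i`, `b = 1`: for all `k ≥ 1`, the determinant of the `2k × 2k` matrix
`F_{2k} = [[A_k, B_k], [(-1)^k B_k, A_k]]` equals `F(k+1)²`, the square of the
`(k+1)`-st Fibonacci number. -/
theorem stmt14 (k : ℕ) (hk : 1 ≤ k)
    (A B : Matrix (Fin k) (Fin k) ℂ)
    (hA : ∀ p q : Fin k, A p q =
      if q.1 = p.1 + 1 then Complex.I else if p.1 = q.1 + 1 then -Complex.I else 0)
    (hB : ∀ p q : Fin k, B p q =
      if p.1 + q.1 + 1 = k then (-1 : ℂ) ^ p.1 * 1 else 0) :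
    (Matrix.fromBlocks A B (((-1 : ℂ) ^ k) • B) A).det = (Nat.fib (k + 1) : ℂ) ^ 2 := by
  obtain ⟨m, rfl⟩ : ∃ m, k = m + 1 := ⟨k - 1, by omega⟩
  -- commutation A * B = B * A
  have hABBA : A * B = B * A := by
    ext p q
    rw [Matrix.mul_apply, Matrix.mul_apply]
    have hq : m - q.1 < m + 1 := by omega
    have hp : m - p.1 < m + 1 := by omega
    rw [Finset.sum_eq_single (⟨m - q.1, hq⟩ : Fin (m+1))
      (fun b _ hb => by
        rw [hB]
        rw [if_neg (by
          intro h
          exact hb (Fin.ext (by simp; omega)))]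
        ring)
      (by simp)]
    rw [Finset.sum_eq_single (⟨m - p.1, hp⟩ : Fin (m+1))
      (fun b _ hb => by
        rw [hB]
        rw [if_neg (by
          intro h
          exact hb (Fin.ext (by simp; omega)))]
        ring)
      (by simp)]
    rw [hA, hA, hB, hB]
    have hq2 := q.2
    have hp2 := p.2
    simp only [mul_one]
    split_ifs
    all_goals try ring
    all_goals try (exfalso; omega)
    all_goals rw [negpow (m - q.1) (p.1+1) (by omega)]
    all_goals ring
  -- B * B = (-1)^m • 1
  have hBB : B * B = ((-1:ℂ)^m) • (1 : Matrix (Fin (m+1)) (Fin (m+1)) ℂ) := by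
    ext p q
    rw [Matrix.mul_apply]
    have hp : m - p.1 < m + 1 := by omega
    rw [Finset.sum_eq_single (⟨m - p.1, hp⟩ : Fin (m+1))
      (fun b _ hb => by
        rw [hB]
        rw [if_neg (fun h => hb (Fin.ext (by simp; omega)))]
        ring)
      (by simp)]
    rw [hB, hB]
    have hp2 := p.2
    have hq2 := q.2
    simp only [Matrix.smul_apply, Matrix.one_apply, smul_eq_mul, mul_one, Fin.ext_iff]
    split_ifs
    all_goals try (exfalso; omega)
    all_goals try rw [← pow_add, negpow (p.1 + (m - p.1)) m (by omega)]
    all_goals ring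
  -- A + I•1 and A - I•1 are the tridiagonal matrices
  have hAI : A + Complex.I • 1 = triM (m+1) Complex.I := by
    ext p q
    simp only [Matrix.add_apply, Matrix.smul_apply, Matrix.one_apply, smul_eq_mul,
      mul_one, hA, triM, Fin.ext_iff]
    split_ifs
    all_goals try (exfalso; omega)
    all_goals ring
  have hAnI : A - Complex.I • 1 = triM (m+1) (-Complex.I) := by
    ext p q
    simp only [Matrix.sub_apply, Matrix.smul_apply, Matrix.one_apply, smul_eq_mul,
      mul_one, hA, triM, Fin.ext_iff]
    split_ifs
    all_goals try (exfalso; omega)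
    all_goals ring
  have hfact : (A + Complex.I • 1) * (A - Complex.I • 1) = 1 + A * A := by
    rw [mul_sub, add_mul, add_mul]
    rw [Matrix.smul_mul, Matrix.mul_smul, Matrix.mul_smul, Matrix.smul_mul,
      Matrix.one_mul, Matrix.mul_one, smul_smul, Complex.I_mul_I, neg_smul, one_smul, Matrix.one_mul]
    abel
  have hdetcore : (1 + A * A).det = ((Nat.fib (m+2) : ℂ))^2 := by
    rw [← hfact, Matrix.det_mul, hAI, hAnI, triM_det_I, triM_det_negI]
    rw [mul_mul_mul_comm, ← mul_pow]
    norm_num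
    ring
  -- invertibility of B
  have hleft : (((-1:ℂ)^m) • B) * B = 1 := by
    rw [Matrix.smul_mul, hBB, smul_smul, ← pow_add]
    rw [Even.neg_one_pow ⟨m, rfl⟩, one_smul]
  letI : Invertible B := invertibleOfLeftInverse _ _ hleft
  have hinvB : ⅟B = ((-1:ℂ)^m) • B := invOf_eq_left_inv hleft
  -- the swap block matrix
  set P : Matrix (Fin (m+1) ⊕ Fin (m+1)) (Fin (m+1) ⊕ Fin (m+1)) ℂ :=
    Matrix.fromBlocks 0 1 1 0 with hPdef
  have hdetP : P.det = (-1:ℂ)^(m+1) := by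
    have h1 : P = Matrix.fromBlocks 1 1 0 1 * Matrix.fromBlocks 1 0 (-1) 1 *
        Matrix.fromBlocks 1 1 0 1 * Matrix.fromBlocks (-1) 0 0 1 := by
      simp [hPdef, Matrix.fromBlocks_multiply]
    rw [h1, Matrix.det_mul, Matrix.det_mul, Matrix.det_mul]
    simp [Matrix.det_fromBlocks_zero₂₁, Matrix.det_fromBlocks_zero₁₂,
      Matrix.det_neg, Fintype.card_fin]
  have hMP : (Matrix.fromBlocks A B (((-1:ℂ)^(m+1)) • B) A) * P
      = Matrix.fromBlocks B A A (((-1:ℂ)^(m+1)) • B) := by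
    simp [hPdef, Matrix.fromBlocks_multiply]
  have hkey : (Matrix.fromBlocks A B (((-1:ℂ)^(m+1)) • B) A).det * ((-1:ℂ)^(m+1))
      = (Matrix.fromBlocks B A A (((-1:ℂ)^(m+1)) • B)).det := by
    have h2 := Matrix.det_mul (Matrix.fromBlocks A B (((-1:ℂ)^(m+1)) • B) A) P
    rw [hMP, hdetP] at h2
    exact h2.symm
  rw [Matrix.det_fromBlocks₁₁ B A A (((-1:ℂ)^(m+1)) • B)] at hkey
  have hsimp : (((-1:ℂ)^(m+1)) • B) - A * ⅟B * A
      = ((-1:ℂ)^(m+1)) • (B * (1 + A * A)) := by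
    rw [hinvB, Matrix.mul_smul, Matrix.smul_mul, hABBA, mul_assoc]
    have hpow : ((-1:ℂ)^m) = -((-1:ℂ)^(m+1)) := by rw [pow_succ]; ring
    rw [hpow, neg_smul, sub_neg_eq_add, Matrix.mul_add, Matrix.mul_one, smul_add]
  rw [hsimp, Matrix.det_smul, Matrix.det_mul, hdetcore, Fintype.card_fin] at hkey
  have hb2 : B.det * B.det = 1 := by
    rw [← Matrix.det_mul, hBB, Matrix.det_smul, Matrix.det_one, mul_one,
      Fintype.card_fin, ← pow_mul]
    exact Even.neg_one_pow (Nat.even_mul_succ_self m)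
  have hs : ((-1:ℂ)^(m+1))^(m+1) * ((-1:ℂ)^(m+1)) = 1 := by
    rw [← pow_succ, ← pow_mul]
    exact Even.neg_one_pow (Nat.even_mul_succ_self (m+1))
  have hs2 : ((-1:ℂ)^(m+1)) * ((-1:ℂ)^(m+1)) = 1 := by
    rw [← pow_add]
    exact Even.neg_one_pow ⟨m+1, by ring⟩
  have final := hkey
  -- goal : det M = fib(m+2)^2
  have : (Matrix.fromBlocks A B (((-1:ℂ)^(m+1)) • B) A).det
      = ((Matrix.fromBlocks A B (((-1:ℂ)^(m+1)) • B) A).det * ((-1:ℂ)^(m+1)))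
        * ((-1:ℂ)^(m+1)) := by
    rw [mul_assoc, hs2, mul_one]
  rw [this, final]
  linear_combination (((-1:ℂ)^(m+1))^(m+1) * ((-1:ℂ)^(m+1)) * ((Nat.fib (m+2):ℂ))^2) * hb2
    + (((Nat.fib (m+2):ℂ))^2) * hs
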